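/- There exists a universal constant C > 0 such that for every t > 0 and every r with 0 < r ≤ 1, the sum over all positive integers k with k·r ≥ 2 of exp(−(log(k·r))²/(8·t)) is at most C · t^{3/2} · e^{16·t} / r. Equivalently, (1/t) · ∑_{k : k·r ≥ 2} exp(−(log(k·r))²/(8·t)) ≤ C · (√t / r) · e^{16·t}. -/

import Mathlib

open scoped Classical

open Real Finset

lemma sq_inv_summable : Summable (fun k : ℕ => (((k : ℝ) + 1) ^ 2)⁻¹) := by
  have h := (summable_nat_add_iff (f := fun n : ℕ => ((n : ℝ) ^ 2)⁻¹) 1).2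
    (by simpa [one_div] using Real.summable_one_div_nat_pow.2 one_lt_two)
  convert h using 2 with k
  push_cast
  rfl
  push_cast
  ring

lemma tail_sq_sum (r : ℝ) (hr : 0 < r) (hr1 : r ≤ 1) :
    Summable (fun k : ℕ => if 2 ≤ ((k : ℝ) + 1) * r then (((k : ℝ) + 1) ^ 2)⁻¹ else 0) ∧
    ∑' k : ℕ, (if 2 ≤ ((k : ℝ) + 1) * r then (((k : ℝ) + 1) ^ 2)⁻¹ else 0) ≤ r := by
  set g : ℕ → ℝ := fun k => if 2 ≤ ((k : ℝ) + 1) * r then (((k : ℝ) + 1) ^ 2)⁻¹ else 0 with hg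
  have hgnn : ∀ k, 0 ≤ g k := by
    intro k; simp only [hg]; split <;> positivity
  have hle : ∀ k, g k ≤ (((k : ℝ) + 1) ^ 2)⁻¹ := by
    intro k; simp only [hg]; split
    · exact le_rfl
    · positivity
  have hsum : Summable g := Summable.of_nonneg_of_le hgnn hle sq_inv_summable
  refine ⟨hsum, ?_⟩
  set N : ℕ := ⌈2 / r⌉₊ with hN
  have hNr : 2 / r ≤ (N : ℝ) := Nat.le_ceil _
  have h2r : (2 : ℝ) ≤ 2 / r := by
    rw [le_div_iff₀ hr]; linarith
  have hN2 : (2 : ℝ) ≤ N := le_trans h2r hNr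
  have hN1 : 1 ≤ N := by exact_mod_cast le_trans (by norm_num : (1:ℝ) ≤ 2) hN2
  have hNpos : (0 : ℝ) < N := by linarith
  have h2Nr : 2 / (N : ℝ) ≤ r := by
    rw [div_le_iff₀ hNpos]
    rw [div_le_iff₀ hr] at hNr
    linarith [mul_comm r (N : ℝ)]
  apply Summable.tsum_le_of_sum_le hsum
  intro s
  -- reindex by k+1
  have key : ∑ k ∈ s, g k ≤ ∑ i ∈ Ioo (N - 1) (s.sup id + 2), ((i : ℝ) ^ 2)⁻¹ := by
    calc ∑ k ∈ s, g k = ∑ k ∈ s.filter (fun k : ℕ => 2 ≤ ((k : ℝ) + 1) * r), (((k : ℝ) + 1) ^ 2)⁻¹ := by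
          rw [Finset.sum_filter]
      _ = ∑ i ∈ (s.filter (fun k : ℕ => 2 ≤ ((k : ℝ) + 1) * r)).image (fun k : ℕ => k + 1), ((i : ℝ) ^ 2)⁻¹ := by
          rw [Finset.sum_image (fun a _ b _ h => by omega)]
          apply Finset.sum_congr rfl
          intro x _
          push_cast
          ring
      _ ≤ _ := by
          apply Finset.sum_le_sum_of_subset_of_nonneg
          · intro i hi
            simp only [Finset.mem_image, Finset.mem_filter] at hi
            obtain ⟨k, ⟨hks, hkc⟩, rfl⟩ := hi
            simp only [Finset.mem_Ioo]
            constructor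
            · have : (2 : ℝ) / r ≤ (k : ℝ) + 1 := by
                rw [div_le_iff₀ hr]; linarith
              have : N ≤ k + 1 := by
                rw [hN]; exact Nat.ceil_le.2 (by exact_mod_cast this)
              omega
            · have := Finset.le_sup (f := id) hks; simp only [id] at this; omega
          · intro i _ _; positivity
  apply key.trans
  calc ∑ i ∈ Ioo (N - 1) (s.sup id + 2), ((i : ℝ) ^ 2)⁻¹ ≤ 2 / ((N - 1 : ℕ) + 1 : ℝ) :=
        sum_Ioo_inv_sq_le _ _
    _ = 2 / (N : ℝ) := by
        congr 1
        have : ((N - 1 : ℕ) : ℝ) = (N : ℝ) - 1 := by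
          rw [Nat.cast_sub hN1]; norm_num
        rw [this]; ring
    _ ≤ r := h2Nr

lemma exp_neg_le_27 (x : ℝ) (hx : 0 < x) : Real.exp (-x) ≤ 27 / x ^ 3 := by
  have h1 : x / 3 ≤ Real.exp (x / 3) := by
    have := Real.add_one_le_exp (x / 3); linarith
  have h2 : x ^ 3 / 27 ≤ Real.exp x := by
    have he : Real.exp x = Real.exp (x/3) ^ 3 := by
      rw [← Real.exp_nat_mul]; ring_nf
    rw [he]
    calc x ^ 3 / 27 = (x/3)^3 := by ring
    _ ≤ Real.exp (x/3) ^ 3 := pow_le_pow_left₀ (by positivity) h1 3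
  rw [Real.exp_neg]
  rw [inv_le_comm₀ (Real.exp_pos x) (by positivity)]
  calc (27 / x ^ 3)⁻¹ = x ^ 3 / 27 := by field_simp
  _ ≤ Real.exp x := h2

lemma exp_neg_c_div_le (c t : ℝ) (hc : 0 < c) (hc1 : c ≤ 1) (ht : 0 < t) :
    Real.exp (-c / t) ≤ 27 / c ^ 3 * t ^ ((3 : ℝ) / 2) := by
  have hC1 : (1 : ℝ) ≤ 27 / c ^ 3 := by
    have hc3 : c ^ 3 ≤ 1 := by nlinarith [sq_nonneg c, mul_pos hc hc]
    rw [le_div_iff₀ (by positivity)]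
    linarith
  rcases le_or_gt t 1 with ht1 | ht1
  · have h1 : Real.exp (-c / t) ≤ 27 / (c / t) ^ 3 := by
      rw [neg_div]
      exact exp_neg_le_27 _ (by positivity)
    have h2 : 27 / (c / t) ^ 3 = 27 / c ^ 3 * t ^ (3 : ℕ) := by
      field_simp
    have h3 : t ^ ((3 : ℕ) : ℝ) ≤ t ^ ((3 : ℝ) / 2) :=
      Real.rpow_le_rpow_of_exponent_ge ht ht1 (by norm_num)
    rw [h2] at h1
    rw [← Real.rpow_natCast t 3] at h1
    calc Real.exp (-c / t) ≤ 27 / c ^ 3 * t ^ ((3 : ℕ) : ℝ) := h1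
    _ ≤ 27 / c ^ 3 * t ^ ((3 : ℝ) / 2) := by
        apply mul_le_mul_of_nonneg_left h3 (by positivity)
  · have h1 : Real.exp (-c / t) ≤ 1 := by
      apply Real.exp_le_one_iff.2
      rw [neg_div]
      have : 0 < c / t := by positivity
      linarith
    have h2 : (1 : ℝ) ≤ t ^ ((3 : ℝ) / 2) :=
      Real.one_le_rpow ht1.le (by norm_num)
    nlinarith

/-- Bound (14): there is a universal constant `C > 0` such that for all `t > 0` and
`0 < r ≤ 1`, `∑_{k ≥ 1, k r ≥ 2} exp (-(log (k r))² / (8 t)) ≤ C t^{3/2} e^{16 t} / r`. -/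
theorem log_gaussian_sum_le :
    ∃ C : ℝ, 0 < C ∧ ∀ t r : ℝ, 0 < t → 0 < r → r ≤ 1 →
      Summable (fun k : ℕ => if 2 ≤ ((k : ℝ) + 1) * r then
        Real.exp (-(Real.log (((k : ℝ) + 1) * r)) ^ 2 / (8 * t)) else 0) ∧
      ∑' k : ℕ, (if 2 ≤ ((k : ℝ) + 1) * r then
          Real.exp (-(Real.log (((k : ℝ) + 1) * r)) ^ 2 / (8 * t)) else 0) ≤
        C * t ^ ((3 : ℝ) / 2) * Real.exp (16 * t) / r := by
  have hlog2 : 0 < Real.log 2 := Real.log_pos one_lt_two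
  have hlog2' : Real.log 2 ≤ 1 := by
    have := Real.log_le_sub_one_of_pos (by norm_num : (0:ℝ) < 2); linarith
  set c : ℝ := Real.log 2 ^ 2 / 16 with hc
  have hcpos : 0 < c := by positivity
  have hc1 : c ≤ 1 := by rw [hc]; nlinarith
  refine ⟨27 / c ^ 3, by positivity, ?_⟩
  intro t r ht hr hr1
  set a : ℕ → ℝ := fun k => if 2 ≤ ((k : ℝ) + 1) * r then
    Real.exp (-(Real.log (((k : ℝ) + 1) * r)) ^ 2 / (8 * t)) else 0 with ha
  set g : ℕ → ℝ := fun k => if 2 ≤ ((k : ℝ) + 1) * r then (((k : ℝ) + 1) ^ 2)⁻¹ else 0 with hg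
  set D : ℝ := Real.exp (16 * t) * Real.exp (-c / t) / r ^ 2 with hD
  have hDpos : 0 < D := by positivity
  have hann : ∀ k, 0 ≤ a k := by
    intro k; simp only [ha]; split
    · positivity
    · exact le_rfl
  have key : ∀ k : ℕ, a k ≤ D * g k := by
    intro k
    simp only [ha, hg, hD]
    split
    · rename_i hcond
      set x : ℝ := ((k : ℝ) + 1) * r with hx
      have hx2 : (2:ℝ) ≤ x := hcond
      have hx0 : (0:ℝ) < x := by linarith
      set L : ℝ := Real.log x with hL
      have hL2 : Real.log 2 ≤ L := Real.log_le_log (by norm_num) hx2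
      have hLpos : 0 < L := lt_of_lt_of_le hlog2 hL2
      have hsplit : -L ^ 2 / (8 * t) = (-L^2/(16*t)) + (-L^2/(16*t)) := by
        field_simp; ring
      have e1 : Real.exp (-L^2/(16*t)) ≤ Real.exp (16*t) * (x^2)⁻¹ := by
        have h1 : -L^2/(16*t) ≤ 16*t - 2*L := by
          rw [div_le_iff₀ (by positivity)]
          nlinarith [sq_nonneg (L - 16*t)]
        calc Real.exp (-L^2/(16*t)) ≤ Real.exp (16*t - 2*L) := Real.exp_le_exp.2 h1
        _ = Real.exp (16*t) * (x^2)⁻¹ := by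
            rw [Real.exp_sub]
            have hx2' : Real.exp (2*L) = x ^ 2 := by
              rw [two_mul, Real.exp_add, hL, Real.exp_log hx0]; ring
            rw [div_eq_mul_inv, hx2']
      have e2 : Real.exp (-L^2/(16*t)) ≤ Real.exp (-c/t) := by
        apply Real.exp_le_exp.2
        rw [div_le_div_iff₀ (by positivity : (0:ℝ) < 16*t) ht]
        have h16c : 16 * c ≤ L ^ 2 := by rw [hc]; nlinarith
        nlinarith [mul_le_mul_of_nonneg_right h16c ht.le]
      have := mul_le_mul e1 e2 (Real.exp_pos _).le (by positivity)
      rw [← Real.exp_add, ← hsplit] at this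
      calc Real.exp (-L ^ 2 / (8*t)) ≤ Real.exp (16*t) * (x^2)⁻¹ * Real.exp (-c/t) := this
      _ = Real.exp (16*t) * Real.exp (-c/t) / r ^ 2 * (((k:ℝ)+1)^2)⁻¹ := by
          rw [hx]
          have hk1 : ((k:ℝ)+1) ≠ 0 := by positivity
          field_simp
    · simp
  obtain ⟨hgs, hgle⟩ := tail_sq_sum r hr hr1
  have hgsum : Summable (fun k => D * g k) := hgs.mul_left D
  have hasum : Summable a := Summable.of_nonneg_of_le hann key hgsum
  refine ⟨hasum, ?_⟩
  have hE := exp_neg_c_div_le c t hcpos hc1 ht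
  calc ∑' k, a k ≤ ∑' k, D * g k := Summable.tsum_le_tsum key hasum hgsum
  _ = D * ∑' k, g k := tsum_mul_left
  _ ≤ D * r := mul_le_mul_of_nonneg_left hgle hDpos.le
  _ = Real.exp (16*t) * Real.exp (-c/t) / r := by
      rw [hD]; field_simp
  _ ≤ Real.exp (16*t) * (27 / c^3 * t ^ ((3:ℝ)/2)) / r := by gcongr
  _ = 27 / c^3 * t ^ ((3:ℝ)/2) * Real.exp (16*t) / r := by ring
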